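/- For a single dRep under majority agreement (k = 0), proxy selection admits an approximation ratio of min(n, 3α/β), where α = |∪_{i∈N} R_i| is the total number of revealed proposals across all voters and β = min_i |R_i| is the minimum revealed set size: either using dRep0 (approving only win(P)) directly elects a proposal of intrinsic score at least (β/(3α))·opt(P), or the revealed profile alone contains a proposal with revealed score at least (β/(3α))·opt(P). -/
import Mathlib


open Finset

/-- An instance of proxy selection: `intrinsic i j` is voter `i`'s intrinsic approval of
proposal `j`; `visible i j` records whether this preference is revealed to the voter
(the revealed preference is `some (intrinsic i j)` if visible and `⊥` otherwise). -/
structure PSInstance (n m : ℕ) where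
  intrinsic : Fin n → Fin m → Bool
  visible : Fin n → Fin m → Bool

namespace PSInstance

variable {n m : ℕ}

/-- Revealed preference of voter `i` on proposal `j`. -/
def revealed (I : PSInstance n m) (i : Fin n) (j : Fin m) : Option Bool :=
  if I.visible i j then some (I.intrinsic i j) else none

/-- The revealed set `R_i` of voter `i`. -/
def Rset (I : PSInstance n m) (i : Fin n) : Finset (Fin m) :=
  univ.filter fun j => I.visible i j

/-- `m_i = |R_i|`. -/
def mi (I : PSInstance n m) (i : Fin n) : ℕ := (I.Rset i).card

/-- Hamming distance between voter `i`'s revealed ballot and type `t`, restricted to `R_i`. -/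
def dist (I : PSInstance n m) (i : Fin n) (t : Fin m → Bool) : ℕ :=
  (univ.filter fun j => I.visible i j ∧ I.intrinsic i j ≠ t j).card

/-- Voter `i` (with reluctance parameter `k`) is attracted by a dRep of type `t`. -/
def Attracted (I : PSInstance n m) (k : ℕ) (i : Fin n) (t : Fin m → Bool) : Prop :=
  I.dist i t ≤ (I.mi i - k) / 2

instance (I : PSInstance n m) (k : ℕ) (i : Fin n) (t : Fin m → Bool) :
    Decidable (I.Attracted k i t) := by unfold Attracted; exact inferInstance

/-- Intrinsic approval score of proposal `j`. -/
def sc (I : PSInstance n m) (j : Fin m) : ℕ :=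
  (univ.filter fun i => I.intrinsic i j = true).card

/-- Revealed approval score of proposal `j`. -/
def rsc (I : PSInstance n m) (j : Fin m) : ℕ :=
  (univ.filter fun i => I.visible i j ∧ I.intrinsic i j = true).card

/-- `j` is an intrinsically optimal proposal (`win(P)`). -/
def IsOpt (I : PSInstance n m) (j : Fin m) : Prop := ∀ j', I.sc j' ≤ I.sc j

/-- Total score of proposal `j` given a family `D` of dReps and a delegation assignment
`deleg` (delegating voters contribute through their dRep's ballot, the rest vote their
revealed preferences directly). -/
def totalScore {ι : Type} (I : PSInstance n m) (D : ι → Fin m → Bool)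
    (deleg : Fin n → Option ι) (j : Fin m) : ℕ :=
  (univ.filter fun i => (match deleg i with
    | some d => D d j
    | none => I.visible i j && I.intrinsic i j) = true).card

/-- A delegation assignment is valid (w.r.t. per-voter reluctance parameters `k`) if every
delegating voter is attracted by their chosen dRep, and every voter attracted by at least
one dRep delegates (to an arbitrary one of them). -/
def ValidDeleg {ι : Type} (I : PSInstance n m) (k : Fin n → ℕ) (D : ι → Fin m → Bool)
    (deleg : Fin n → Option ι) : Prop :=
  (∀ i d, deleg i = some d → I.Attracted (k i) i (D d)) ∧
  (∀ i, (∃ d, I.Attracted (k i) i (D d)) → deleg i ≠ none)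

/-- `j` is elected: it maximizes total score, ties broken in favor of maximum intrinsic score. -/
def Elected {ι : Type} (I : PSInstance n m) (D : ι → Fin m → Bool)
    (deleg : Fin n → Option ι) (j : Fin m) : Prop :=
  (∀ j', I.totalScore D deleg j' ≤ I.totalScore D deleg j) ∧
  (∀ j', I.totalScore D deleg j' = I.totalScore D deleg j → I.sc j' ≤ I.sc j)

/-- `j` is elected when ties are broken in favor of maximum *revealed* score. -/
def ElectedRev {ι : Type} (I : PSInstance n m) (D : ι → Fin m → Bool)
    (deleg : Fin n → Option ι) (j : Fin m) : Prop :=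
  (∀ j', I.totalScore D deleg j' ≤ I.totalScore D deleg j) ∧
  (∀ j', I.totalScore D deleg j' = I.totalScore D deleg j → I.rsc j' ≤ I.rsc j)

end PSInstance

/-- Under majority agreement, with `α` the number of proposals revealed to
some voter and `β` a positive lower bound on all revealed-set sizes, either the revealed
profile already contains a proposal of revealed score at least `β·opt/(3α)`, or dRep0
(approving only the optimum) makes every elected proposal have intrinsic score at least
`β·opt/(3α)`; in any case a single dRep achieves approximation ratio `min(n, 3α/β)`. -/
lemma stmt13_key (n m : ℕ) (I : PSInstance n m) (jopt : Fin m)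
    (β : ℕ) (hβ : ∀ i, β ≤ I.mi i) (hβpos : 0 < β)
    (deleg : Fin n → Option Unit)
    (hvd : I.ValidDeleg (fun _ => 0) (fun _ : Unit => fun j => decide (j = jopt)) deleg)
    (j : Fin m) (hel : I.Elected (fun _ : Unit => fun j => decide (j = jopt)) deleg j) :
    β * I.sc jopt ≤ 3 * (Finset.univ.biUnion I.Rset).card * I.sc j := by
  classical
  set t0 : Fin m → Bool := fun j' => decide (j' = jopt) with ht0
  set U : Finset (Fin m) := Finset.univ.biUnion I.Rset with hU
  set α : ℕ := U.card with hα
  by_cases hN0 : I.sc jopt = 0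
  · simp [hN0]
  -- there is a voter approving jopt, hence n > 0 and β ≤ α
  have hpos : 0 < I.sc jopt := Nat.pos_of_ne_zero hN0
  obtain ⟨i0, hi0⟩ : ∃ i0 : Fin n, True := by
    rw [PSInstance.sc, Finset.card_pos] at hpos
    obtain ⟨i, hi⟩ := hpos
    exact ⟨i, trivial⟩
  have hβα : β ≤ α := by
    calc β ≤ I.mi i0 := hβ i0
    _ = (I.Rset i0).card := rfl
    _ ≤ α := Finset.card_le_card (Finset.subset_biUnion_of_mem I.Rset (Finset.mem_univ i0))
  by_cases hj : j = jopt
  · subst hj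
    have : β ≤ 3 * α := le_trans hβα (by omega)
    exact Nat.mul_le_mul_right _ this
  -- j ≠ jopt case
  -- B: approvers of jopt who delegate; C: approvers of jopt who don't
  set B : Finset (Fin n) :=
    Finset.univ.filter (fun i => I.intrinsic i jopt = true ∧ deleg i ≠ none) with hB
  set C : Finset (Fin n) :=
    Finset.univ.filter (fun i => I.intrinsic i jopt = true ∧ deleg i = none) with hC
  have hBC : B.card + C.card = I.sc jopt := by
    have e := Finset.card_filter_add_card_filter_not
      (s := Finset.univ.filter (fun i => I.intrinsic i jopt = true))
      (p := fun i => deleg i ≠ none)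
    have e1 : (Finset.univ.filter (fun i => I.intrinsic i jopt = true)).filter
        (fun i => deleg i ≠ none) = B := by
      ext i; simp only [hB, Finset.mem_filter, Finset.mem_univ, true_and]
    have e2 : (Finset.univ.filter (fun i => I.intrinsic i jopt = true)).filter
        (fun i => ¬ deleg i ≠ none) = C := by
      ext i; simp only [hC, Finset.mem_filter, Finset.mem_univ, true_and, not_not]
    rw [e1, e2] at e
    exact e
  -- g j' : revealed approvals of j' among non-delegators
  set g : Fin m → ℕ := fun j' =>
    (Finset.univ.filter fun i =>
      deleg i = none ∧ I.visible i j' ∧ I.intrinsic i j' = true).card with hg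
  -- a i : revealed approvals of voter i
  set a : Fin n → ℕ := fun i =>
    (Finset.univ.filter fun j' => I.visible i j' ∧ I.intrinsic i j' = true).card with ha
  set T : Fin m → ℕ := I.totalScore (fun _ : Unit => t0) deleg with hT
  have h1 : T j = g j := by
    rw [hT, PSInstance.totalScore, hg]
    congr 1
    apply Finset.filter_congr
    intro i _
    cases hd : deleg i with
    | none => simp [hd, Bool.and_eq_true]
    | some d => simp [hd, ht0, hj]
  have h2 : B.card ≤ T jopt := by
    apply Finset.card_le_card
    intro i hi
    rw [hB, Finset.mem_filter] at hi
    simp only [Finset.mem_filter]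
    refine ⟨Finset.mem_univ i, ?_⟩
    cases hd : deleg i with
    | none => exact absurd hd hi.2.2
    | some d => simp [ht0]
  have h3 : ∀ j', g j' ≤ T j' := by
    intro j'
    apply Finset.card_le_card
    intro i hi
    rw [Finset.mem_filter] at hi
    simp only [Finset.mem_filter]
    refine ⟨Finset.mem_univ i, ?_⟩
    rw [hi.2.1]
    simp [hi.2.2.1, hi.2.2.2]
  have h4 : ∀ j', g j' ≤ I.sc j' := by
    intro j'
    apply Finset.card_le_card
    intro i hi
    rw [Finset.mem_filter] at hi
    simp only [Finset.mem_filter]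
    exact ⟨Finset.mem_univ i, hi.2.2.2⟩
  -- non-delegating approvers of jopt have many revealed approvals
  have h5 : ∀ i ∈ C, β ≤ 2 * a i := by
    intro i hi
    rw [hC, Finset.mem_filter] at hi
    obtain ⟨-, hio, hdn⟩ := hi
    have hnat : ¬ I.Attracted 0 i t0 := by
      intro hatt
      exact hvd.2 i ⟨(), hatt⟩ hdn
    rw [PSInstance.Attracted, Nat.sub_zero, not_le] at hnat
    have hda : I.dist i t0 ≤ a i := by
      rw [PSInstance.dist, ha]
      apply Finset.card_le_card
      intro j' hj'
      rw [Finset.mem_filter] at hj'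
      rw [Finset.mem_filter]
      refine ⟨Finset.mem_univ j', hj'.2.1, ?_⟩
      by_cases hje : j' = jopt
      · subst hje; exact hio
      · cases hb : I.intrinsic i j' with
        | true => rfl
        | false =>
          exfalso
          apply hj'.2.2
          rw [hb, ht0]
          simp [hje]
    have hmi : β ≤ I.mi i := hβ i
    omega
  -- total revealed approvals among non-delegators
  have h6 : C.card * β ≤ 2 * ∑ j' ∈ U, g j' := by
    have hsum : ∑ i ∈ C, a i ≤ ∑ j' ∈ U, g j' := by
      have hgsum : ∀ j', g j' = ∑ i : Fin n,
          (if deleg i = none ∧ I.visible i j' = true ∧ I.intrinsic i j' = true then 1 else 0) :=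
        fun j' => Finset.card_filter _ _
      have hasum : ∀ i, a i = ∑ j' ∈ U,
          (if I.visible i j' = true ∧ I.intrinsic i j' = true then 1 else 0) := by
        intro i
        have h0 : ∑ j' ∈ U, (if I.visible i j' = true ∧ I.intrinsic i j' = true then 1 else 0)
            = ∑ j' : Fin m, (if I.visible i j' = true ∧ I.intrinsic i j' = true then 1 else 0) := by
          apply Finset.sum_subset (Finset.subset_univ U)
          intro j' _ hj'
          have : ¬ I.visible i j' = true := by
            intro hv
            apply hj'
            rw [hU]
            refine Finset.mem_biUnion.2 ⟨i, Finset.mem_univ i, ?_⟩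
            rw [PSInstance.Rset, Finset.mem_filter]
            exact ⟨Finset.mem_univ j', hv⟩
          simp [this]
        calc a i = ∑ j' : Fin m,
            (if I.visible i j' = true ∧ I.intrinsic i j' = true then 1 else 0) :=
            Finset.card_filter _ _
          _ = _ := h0.symm
      calc ∑ i ∈ C, a i
          = ∑ i ∈ C, ∑ j' ∈ U,
            (if I.visible i j' = true ∧ I.intrinsic i j' = true then 1 else 0) := by
            exact Finset.sum_congr rfl fun i _ => hasum i
        _ = ∑ i ∈ C, ∑ j' ∈ U,
            (if deleg i = none ∧ I.visible i j' ∧ I.intrinsic i j' = true then 1 else 0) := by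
            apply Finset.sum_congr rfl
            intro i hi
            rw [hC, Finset.mem_filter] at hi
            exact Finset.sum_congr rfl fun j' _ => by simp [hi.2.2]
        _ ≤ ∑ i : Fin n, ∑ j' ∈ U,
            (if deleg i = none ∧ I.visible i j' ∧ I.intrinsic i j' = true then 1 else 0) :=
            Finset.sum_le_sum_of_subset (Finset.subset_univ C)
        _ = ∑ j' ∈ U, ∑ i : Fin n,
            (if deleg i = none ∧ I.visible i j' ∧ I.intrinsic i j' = true then 1 else 0) :=
            Finset.sum_comm
        _ = ∑ j' ∈ U, g j' := Finset.sum_congr rfl fun j' _ => (hgsum j').symm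
    have hCb : C.card * β ≤ 2 * ∑ i ∈ C, a i := by
      calc C.card * β = ∑ _i ∈ C, β := by rw [Finset.sum_const, smul_eq_mul]
        _ ≤ ∑ i ∈ C, 2 * a i := Finset.sum_le_sum h5
        _ = 2 * ∑ i ∈ C, a i := by rw [Finset.mul_sum]
    omega
  -- U is nonempty, pick a maximizer of g on U
  have hUne : U.Nonempty := by
    have : 0 < (I.Rset i0).card := lt_of_lt_of_le hβpos (hβ i0)
    obtain ⟨j0, hj0⟩ := Finset.card_pos.1 this
    exact ⟨j0, Finset.mem_biUnion.2 ⟨i0, Finset.mem_univ i0, hj0⟩⟩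
  obtain ⟨js, hjs, hjsmax⟩ := Finset.exists_max_image U g hUne
  have h8 : ∑ j' ∈ U, g j' ≤ α * g js := by
    calc ∑ j' ∈ U, g j' ≤ U.card • g js := Finset.sum_le_card_nsmul U g (g js) hjsmax
      _ = α * g js := by rw [smul_eq_mul, hα]
  -- facts about the elected j
  have hTmax : ∀ j', T j' ≤ T j := hel.1
  have hTj : T j ≤ I.sc j := by rw [h1]; exact h4 j
  have hscB : B.card ≤ I.sc j := le_trans h2 (le_trans (hTmax jopt) hTj)
  have hscg : g js ≤ I.sc j := le_trans (h3 js) (le_trans (hTmax js) hTj)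
  -- combine: β * (B + C) ≤ 3α * sc j
  have hb1 : β * B.card ≤ α * I.sc j := Nat.mul_le_mul hβα hscB
  have hb2 : β * C.card ≤ 2 * (α * I.sc j) := by
    calc β * C.card = C.card * β := Nat.mul_comm _ _
      _ ≤ 2 * ∑ j' ∈ U, g j' := h6
      _ ≤ 2 * (α * g js) := Nat.mul_le_mul_left 2 h8
      _ ≤ 2 * (α * I.sc j) := Nat.mul_le_mul_left 2 (Nat.mul_le_mul_left α hscg)
  calc β * I.sc jopt = β * (B.card + C.card) := by rw [hBC]
    _ = β * B.card + β * C.card := Nat.mul_add _ _ _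
    _ ≤ α * I.sc j + 2 * (α * I.sc j) := Nat.add_le_add hb1 hb2
    _ = 3 * α * I.sc j := by ring

theorem stmt13 (n m : ℕ) (I : PSInstance n m) (jopt : Fin m) (hopt : I.IsOpt jopt)
    (β : ℕ) (hβ : ∀ i, β ≤ I.mi i) (hβpos : 0 < β) :
    ((∃ j, (β : ℚ) * I.sc jopt ≤ 3 * (Finset.univ.biUnion I.Rset).card * I.rsc j) ∨
      (∀ deleg : Fin n → Option Unit,
        I.ValidDeleg (fun _ => 0) (fun _ : Unit => fun j => decide (j = jopt)) deleg →
        ∀ j, I.Elected (fun _ : Unit => fun j => decide (j = jopt)) deleg j →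
          (β : ℚ) * I.sc jopt ≤ 3 * (Finset.univ.biUnion I.Rset).card * I.sc j)) ∧
    (∃ t : Fin m → Bool, ∀ deleg : Fin n → Option Unit,
      I.ValidDeleg (fun _ => 0) (fun _ => t) deleg →
      ∀ j, I.Elected (fun _ => t) deleg j →
        (I.sc jopt : ℚ) ≤
          min (n : ℚ) ((3 * (Finset.univ.biUnion I.Rset).card) / β) * I.sc j) := by
  constructor
  · right
    intro deleg hvd j hel
    have key := stmt13_key n m I jopt β hβ hβpos deleg hvd j hel

    exact_mod_cast key
  · refine ⟨fun j' => decide (j' = jopt), fun deleg hvd j hel => ?_⟩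
    have key := stmt13_key n m I jopt β hβ hβpos deleg hvd j hel
    set α : ℕ := (Finset.univ.biUnion I.Rset).card
    have hscn : I.sc jopt ≤ n := by
      rw [PSInstance.sc]
      calc (Finset.univ.filter fun i => I.intrinsic i jopt = true).card
          ≤ (Finset.univ : Finset (Fin n)).card := Finset.card_le_card (Finset.filter_subset _ _)
        _ = n := Finset.card_univ.trans (Fintype.card_fin n)
    have hn : (I.sc jopt : ℚ) ≤ (n : ℚ) * I.sc j := by
      by_cases hz : I.sc j = 0
      · have : β * I.sc jopt ≤ 0 := by
          rw [hz] at key; simpa using key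
        have : I.sc jopt = 0 := by
          rcases Nat.eq_zero_of_le_zero this with h
          exact (Nat.mul_eq_zero.1 h).resolve_left (by omega)
        rw [this]
        push_cast
        positivity
      · have h1 : 1 ≤ I.sc j := Nat.one_le_iff_ne_zero.2 hz
        have : I.sc jopt ≤ n * I.sc j := le_trans hscn (Nat.le_mul_of_pos_right n h1)
        exact_mod_cast this
    have hr : (I.sc jopt : ℚ) ≤ ((3 * α : ℚ) / β) * I.sc j := by
      rw [div_mul_eq_mul_div, le_div_iff₀ (by exact_mod_cast hβpos)]
      have : (β : ℚ) * I.sc jopt ≤ 3 * α * I.sc j := by exact_mod_cast key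
      linarith
    rcases min_cases (n : ℚ) ((3 * α : ℚ) / β) with ⟨hm, -⟩ | ⟨hm, -⟩
    · rw [hm]; exact hn
    · rw [hm]; exact hr
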